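/- Let X ⊆ ℝ^s be an open convex set, let K ⊆ ℝ^m be a closed convex cone with vertex at the origin, and let g : X → ℝ^m be Fréchet differentiable and scalarly quasiconvex on X with respect to K. Then for all x, y ∈ X with g(x) ∈ −K and g(y) ∈ −K one has Jg(x)(y − x) ∈ −M**(x), where M*(x) := {μ ∈ K* | μ · g(x) = 0} and M**(x) is the positive polar cone of M*(x). -/

import Mathlib

open Matrix Set

/-- The positive polar cone of a set `A ⊆ ℝ^d`. -/
def polarCone {d : ℕ} (A : Set (Fin d → ℝ)) : Set (Fin d → ℝ) :=
  {l | ∀ x ∈ A, 0 ≤ l ⬝ᵥ x}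

/-- For a feasible point `x` (i.e. `g x ∈ −K`),
`M*(x) := {μ ∈ K* | μ ⬝ᵥ g x = 0}`. -/
def Mstar {s m : ℕ} (K : Set (Fin m → ℝ)) (g : (Fin s → ℝ) → (Fin m → ℝ))
    (x : Fin s → ℝ) : Set (Fin m → ℝ) :=
  {μ | μ ∈ polarCone K ∧ μ ⬝ᵥ g x = 0}

/-- The dot product with a fixed vector, as a continuous linear map. -/
noncomputable def dotCLM {m : ℕ} (μ : Fin m → ℝ) : (Fin m → ℝ) →L[ℝ] ℝ :=
  LinearMap.toContinuousLinearMap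
    { toFun := fun v => μ ⬝ᵥ v
      map_add' := fun a b => dotProduct_add μ a b
      map_smul' := fun c a => by simp [dotProduct_smul] }

/-- Let `X ⊆ ℝ^s` be an open convex set, `K ⊆ ℝ^m` a closed convex cone with vertex
at the origin, and `g : X → ℝ^m` Fréchet differentiable (with Jacobian `Jg`) and
scalarly quasiconvex on `X` w.r.t. `K` (i.e. `x ↦ μ ⬝ᵥ g x` is quasiconvex for every
`μ ∈ K*`).  Then for all `x, y ∈ X` with `g x ∈ −K` and `g y ∈ −K` one has
`Jg x (y − x) ∈ −M**(x)`, where `M**(x)` is the positive polar cone of `M*(x)`. -/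
theorem stmt_9 {s m : ℕ} (X : Set (Fin s → ℝ)) (hXopen : IsOpen X) (hXconvex : Convex ℝ X)
    (K : Set (Fin m → ℝ))
    (hK0 : (0 : Fin m → ℝ) ∈ K)
    (hKcone : ∀ t : ℝ, 0 < t → ∀ y ∈ K, t • y ∈ K)
    (hKclosed : IsClosed K) (hKconvex : Convex ℝ K)
    (g : (Fin s → ℝ) → (Fin m → ℝ))
    (Jg : (Fin s → ℝ) → ((Fin s → ℝ) →L[ℝ] (Fin m → ℝ)))
    (hdiff : ∀ x ∈ X, HasFDerivAt g (Jg x) x)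
    (hscq : ∀ μ ∈ polarCone K, ∀ x ∈ X, ∀ y ∈ X, ∀ t ∈ Icc (0 : ℝ) 1,
      μ ⬝ᵥ g (x + t • (y - x)) ≤ max (μ ⬝ᵥ g x) (μ ⬝ᵥ g y)) :
    ∀ x ∈ X, ∀ y ∈ X, -g x ∈ K → -g y ∈ K →
      -(Jg x (y - x)) ∈ polarCone (Mstar K g x) := by
  intro x hx y hy hgx hgy μ hμ
  obtain ⟨hμK, hμgx⟩ := hμ
  -- the scalar function along the segment
  set φ : ℝ → ℝ := fun t => μ ⬝ᵥ g (x + t • (y - x)) with hφ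
  have hφ0 : φ 0 = 0 := by simp [hφ, hμgx]
  -- μ ⬝ᵥ g y ≤ 0
  have hgy0 : μ ⬝ᵥ g y ≤ 0 := by
    have := hμK (-g y) hgy
    simpa [dotProduct_neg] using this
  have hφle : ∀ t ∈ Icc (0 : ℝ) 1, φ t ≤ 0 := by
    intro t ht
    have := hscq μ hμK x hx y hy t ht
    calc φ t ≤ max (μ ⬝ᵥ g x) (μ ⬝ᵥ g y) := this
      _ ≤ 0 := by rw [hμgx]; exact max_le le_rfl hgy0
  -- derivative of φ at 0
  have hline : HasDerivAt (fun t : ℝ => x + t • (y - x)) (y - x) 0 := by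
    have h1 : HasDerivAt (fun t : ℝ => t • (y - x)) ((1 : ℝ) • (y - x)) 0 :=
      (hasDerivAt_id (0 : ℝ)).smul_const (y - x)
    simpa using h1.const_add x
  have hgd : HasDerivAt (fun t : ℝ => g (x + t • (y - x))) (Jg x (y - x)) 0 := by
    have hx0 : x + (0 : ℝ) • (y - x) = x := by simp
    have h2 : HasFDerivAt g (Jg x) (x + (0:ℝ) • (y - x)) := by rw [hx0]; exact hdiff x hx
    exact h2.comp_hasDerivAt 0 hline
  have hφd : HasDerivAt φ (μ ⬝ᵥ Jg x (y - x)) 0 := by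
    have := ((dotCLM μ).hasFDerivAt.comp_hasDerivAt 0 hgd)
    simpa [hφ, dotCLM, Function.comp_def] using this
  -- derivative is limit of slopes from the right, which are ≤ 0
  have hslope : Filter.Tendsto (slope φ 0) (nhdsWithin 0 (Ioi 0)) (nhds (μ ⬝ᵥ Jg x (y - x))) := by
    have := hasDerivAt_iff_tendsto_slope.mp hφd
    exact this.mono_left (nhdsWithin_mono 0 (fun t ht => ne_of_gt ht))
  have hd_le : μ ⬝ᵥ Jg x (y - x) ≤ 0 := by
    refine le_of_tendsto hslope ?_
    filter_upwards [Ioc_mem_nhdsGT_of_mem (by constructor <;> norm_num : (0:ℝ) ∈ Ico (0:ℝ) 1)]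
      with t ht
    have hφt : φ t ≤ 0 := hφle t ⟨le_of_lt ht.1, ht.2⟩
    have hsl : slope φ 0 t = φ t / t := by
      simp [slope_def_field, hφ0]
    rw [hsl]
    exact div_nonpos_of_nonpos_of_nonneg hφt (le_of_lt ht.1)
  show 0 ≤ (-(Jg x (y - x))) ⬝ᵥ μ
  rw [neg_dotProduct, dotProduct_comm]
  linarith
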